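/- Fix an integer k ≥ 2 and let W be a k × k row-stochastic, strictly positive, invertible matrix with image simplex Δ*. Fix r₀ with 0 < r₀ ≤ (2·log₂ e)/9, set r = √(r₀/(2·log₂ e)), let N = ⌊1/r⌋, and let N* be the set of probability vectors in Δ* whose coordinates are all integer multiples of 1/N; for P ∈ N* let R_P be its neighbor set. Let p_min = inf{ P y : P ∈ Δ*, y ∈ Fin k } and p_max = sup{ P y : P ∈ Δ*, y ∈ Fin k } (strict positivity of W gives 0 < p_min ≤ p_max < 1). Then for every P ∈ N* and every Q ∈ R_P, the variance of the log-likelihood ratio satisfies (65·log₂ e / 72)·r₀ ≤ V(P‖Q) ≤ (5·log₂ e / (2·p_min·(1−p_max)²))·r₀. -/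

import Mathlib

/-- Kullback–Leibler divergence in bits between two (strictly positive) probability
vectors on `Fin k`. -/
noncomputable def klD {k : ℕ} (P Q : Fin k → ℝ) : ℝ :=
  ∑ y, P y * Real.logb 2 (P y / Q y)

/-- Variance of the log-likelihood ratio (in bits). -/
noncomputable def Vllr {k : ℕ} (P Q : Fin k → ℝ) : ℝ :=
  ∑ y, P y * (Real.logb 2 (P y / Q y) - klD P Q) ^ 2

/-- `Q` is a neighbor of `P` at grid spacing `1/N`. -/
def IsNeighbor {k : ℕ} (N : ℕ) (P Q : Fin k → ℝ) : Prop :=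
  ∃ a b : Fin k, a ≠ b ∧ Q a = P a + 1 / N ∧ Q b = P b - 1 / N ∧
    ∀ i, i ≠ a → i ≠ b → Q i = P i


lemma log_le_half_sub_inv {x : ℝ} (hx : 1 ≤ x) : Real.log x ≤ (x - x⁻¹) / 2 := by
  have key : ∀ y ∈ Set.Ici (1:ℝ), HasDerivAt (fun z : ℝ => z - z⁻¹ - 2 * Real.log z)
      (1 + (y^2)⁻¹ - 2 * y⁻¹) y := by
    intro y hy
    have hy0 : y ≠ 0 := by simp only [Set.mem_Ici] at hy; nlinarith
    have h1 : HasDerivAt (fun z : ℝ => z - z⁻¹) (1 - -(y^2)⁻¹) y :=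
      (hasDerivAt_id y).sub (hasDerivAt_inv hy0)
    have h2 : HasDerivAt (fun z : ℝ => 2 * Real.log z) (2 * y⁻¹) y :=
      (Real.hasDerivAt_log hy0).const_mul 2
    have := h1.sub h2
    exact this.congr_deriv (by ring)
  have mono : MonotoneOn (fun z : ℝ => z - z⁻¹ - 2 * Real.log z) (Set.Ici 1) := by
    apply monotoneOn_of_deriv_nonneg (convex_Ici 1)
    · exact fun y hy => ((key y hy).continuousAt).continuousWithinAt
    · intro y hy
      rw [interior_Ici] at hy
      exact ((key y (Set.mem_Ici.2 (le_of_lt hy))).differentiableAt).differentiableWithinAt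
    · intro y hy
      rw [interior_Ici] at hy
      rw [(key y (Set.mem_Ici.2 (le_of_lt hy))).deriv]
      have hy1 : (1:ℝ) < y := hy
      have : (1 - y⁻¹)^2 = 1 + (y^2)⁻¹ - 2 * y⁻¹ := by
        field_simp
        ring
      nlinarith [sq_nonneg (1 - y⁻¹)]
  have := mono (Set.mem_Ici.2 le_rfl) (Set.mem_Ici.2 hx) hx
  simp only [Real.log_one] at this
  simp only [inv_one] at this
  linarith

lemma sq_log_le {u : ℝ} (hu : 0 ≤ u) : (Real.log (1+u))^2 ≤ u^2/(1+u) := by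
  have h1 : (0:ℝ) < 1 + u := by linarith
  set t := Real.sqrt (1+u) with ht
  have ht1 : 1 ≤ t := by
    have h := Real.sqrt_le_sqrt (show (1:ℝ) ≤ 1+u by linarith)
    rwa [Real.sqrt_one] at h
  have ht0 : 0 < t := lt_of_lt_of_le one_pos ht1
  have htsq : t^2 = 1 + u := Real.sq_sqrt (le_of_lt h1)
  have hlog : Real.log (1+u) = 2 * Real.log t := by
    rw [← htsq, Real.log_pow]; push_cast; ring
  have h2 : Real.log t ≤ (t - t⁻¹)/2 := log_le_half_sub_inv ht1
  have hlognn : 0 ≤ Real.log (1+u) := Real.log_nonneg (by linarith)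
  have hub : Real.log (1+u) ≤ u / t := by
    rw [hlog]
    have h3 : t - t⁻¹ = u / t := by
      field_simp
      nlinarith [htsq]
    linarith [h3 ▸ h2]
  calc (Real.log (1+u))^2 ≤ (u/t)^2 := by nlinarith
    _ = u^2/(1+u) := by rw [div_pow, htsq]

lemma log_ge_div {u : ℝ} (hu : 0 ≤ u) : u/(1+u) ≤ Real.log (1+u) := by
  have h1 : (0:ℝ) < 1+u := by linarith
  have h2 := Real.log_le_sub_one_of_pos (show (0:ℝ) < (1+u)⁻¹ by positivity)
  rw [Real.log_inv] at h2
  have h3 : (1+u)⁻¹ - 1 = -(u/(1+u)) := by field_simp; ring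
  linarith [h3 ▸ h2]

set_option maxHeartbeats 2000000 in
/-- for grid points `P ∈ N*` and neighbors `Q ∈ R_P` at packing radius
`r₀ ≤ (2·log₂ e)/9`, the variance of the log-likelihood ratio satisfies
`(65·log₂ e/72)·r₀ ≤ V(P‖Q) ≤ (5·log₂ e/(2·p_min·(1−p_max)²))·r₀`. -/
theorem llr_variance_bounds (k : ℕ) (hk : 2 ≤ k)
    (W : Matrix (Fin k) (Fin k) ℝ)
    (hpos : ∀ x y, 0 < W x y) (hrow : ∀ x, ∑ y, W x y = 1) (hinv : W.det ≠ 0)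
    (Δs : Set (Fin k → ℝ))
    (hΔs : Δs = {f | ∃ p : Fin k → ℝ, (∀ i, 0 ≤ p i) ∧ (∑ i, p i = 1) ∧
        ∀ y, f y = ∑ x, p x * W x y})
    (pmin pmax : ℝ)
    (hpmin : pmin = sInf {x : ℝ | ∃ f ∈ Δs, ∃ y : Fin k, f y = x})
    (hpmax : pmax = sSup {x : ℝ | ∃ f ∈ Δs, ∃ y : Fin k, f y = x})
    (r₀ : ℝ) (hr₀ : 0 < r₀) (hr₀' : r₀ ≤ 2 * Real.logb 2 (Real.exp 1) / 9)
    (r : ℝ) (hr : r = Real.sqrt (r₀ / (2 * Real.logb 2 (Real.exp 1))))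
    (N : ℕ) (hN : N = ⌊1 / r⌋₊)
    (Nstar : Set (Fin k → ℝ))
    (hNstar : Nstar = {f ∈ Δs | ∀ i, ∃ a : ℕ, f i = (a : ℝ) / N}) :
    ∀ P ∈ Nstar, ∀ Q ∈ Nstar, IsNeighbor N P Q →
      (65 * Real.logb 2 (Real.exp 1) / 72) * r₀ ≤ Vllr P Q ∧
      Vllr P Q ≤ (5 * Real.logb 2 (Real.exp 1) / (2 * pmin * (1 - pmax) ^ 2)) * r₀ := by
  intro P hP Q hQ hnb
  obtain ⟨i, j, hij, hQi, hQj, hQo⟩ := hnb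
  have hcpos : 0 < Real.log 2 := Real.log_pos one_lt_two
  have hlogb_e : Real.logb 2 (Real.exp 1) = (Real.log 2)⁻¹ := by
    rw [Real.logb, Real.log_exp, one_div]
  have hk0 : 0 < k := by omega
  -- minimal entry of W
  obtain ⟨xy0, -, hxy0⟩ := Finset.exists_min_image (Finset.univ : Finset (Fin k × Fin k))
    (fun p => W p.1 p.2) ⟨(i, j), Finset.mem_univ _⟩
  set m := W xy0.1 xy0.2 with hm
  have hm_pos : 0 < m := hpos _ _
  have hmle : ∀ x y, m ≤ W x y := fun x y => hxy0 (x, y) (Finset.mem_univ _)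
  -- facts about members of Δs
  have hΔfacts : ∀ f ∈ Δs, (∑ y, f y = 1) ∧ (∀ y, m ≤ f y) ∧ (∀ y, f y ≤ 1 - m) := by
    intro f hf
    rw [hΔs] at hf
    obtain ⟨pp, hp0, hp1, hpf⟩ := hf
    have hsum : ∑ y, f y = 1 := by
      simp only [hpf]
      rw [Finset.sum_comm]
      simp only [← Finset.mul_sum, hrow, mul_one]
      exact hp1
    have hlb : ∀ y, m ≤ f y := by
      intro y
      rw [hpf]
      calc m = ∑ x, pp x * m := by rw [← Finset.sum_mul, hp1, one_mul]
        _ ≤ ∑ x, pp x * W x y :=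
          Finset.sum_le_sum (fun x _ => mul_le_mul_of_nonneg_left (hmle x y) (hp0 x))
    refine ⟨hsum, hlb, fun y => ?_⟩
    have h1 : f y + ∑ y' ∈ Finset.univ.erase y, f y' = 1 := by
      rw [Finset.add_sum_erase _ f (Finset.mem_univ y)]; exact hsum
    have h4 : (Finset.univ.erase y).card • m ≤ ∑ y' ∈ Finset.univ.erase y, f y' :=
      Finset.card_nsmul_le_sum _ _ _ (fun y' _ => hlb y')
    have h3 : (Finset.univ.erase y).card = k - 1 := by
      rw [Finset.card_erase_of_mem (Finset.mem_univ y), Finset.card_univ, Fintype.card_fin]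
    rw [h3, nsmul_eq_mul] at h4
    have h5 : (1:ℝ) ≤ ((k-1 : ℕ) : ℝ) := by
      have : 1 ≤ k - 1 := by omega
      exact_mod_cast this
    have h6 : 1*m ≤ ((k-1 : ℕ) : ℝ)*m := mul_le_mul_of_nonneg_right h5 hm_pos.le
    linarith
  have hPΔ : P ∈ Δs := by rw [hNstar] at hP; exact hP.1
  have hQΔ : Q ∈ Δs := by rw [hNstar] at hQ; exact hQ.1
  -- pmin / pmax facts
  have hSne : {x : ℝ | ∃ f ∈ Δs, ∃ y : Fin k, f y = x}.Nonempty := ⟨P i, P, hPΔ, i, rfl⟩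
  have hbddb : ∀ x ∈ {x : ℝ | ∃ f ∈ Δs, ∃ y : Fin k, f y = x}, m ≤ x := by
    rintro x ⟨f, hf, y, rfl⟩
    exact (hΔfacts f hf).2.1 y
  have hbdda : ∀ x ∈ {x : ℝ | ∃ f ∈ Δs, ∃ y : Fin k, f y = x}, x ≤ 1 - m := by
    rintro x ⟨f, hf, y, rfl⟩
    exact (hΔfacts f hf).2.2 y
  have hpmin_le : ∀ f ∈ Δs, ∀ y, pmin ≤ f y := by
    intro f hf y
    rw [hpmin]
    exact csInf_le ⟨m, hbddb⟩ ⟨f, hf, y, rfl⟩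
  have hpmin_ge : m ≤ pmin := by
    rw [hpmin]; exact le_csInf hSne hbddb
  have hpmax_ge : ∀ f ∈ Δs, ∀ y, f y ≤ pmax := by
    intro f hf y
    rw [hpmax]
    exact le_csSup ⟨1 - m, hbdda⟩ ⟨f, hf, y, rfl⟩
  have hpmax_le : pmax ≤ 1 - m := by
    rw [hpmax]; exact csSup_le hSne hbdda
  have hpmin_pos : 0 < pmin := lt_of_lt_of_le hm_pos hpmin_ge
  have hpmax_lt1 : pmax < 1 := by linarith
  have hpmax_pos : 0 < pmax := lt_of_lt_of_le hpmin_pos (le_trans (hpmin_le P hPΔ i) (hpmax_ge P hPΔ i))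
  -- r and N facts
  have harg : r₀ / (2 * Real.logb 2 (Real.exp 1)) = r₀ * Real.log 2 / 2 := by
    rw [hlogb_e]; field_simp
  have hargpos : 0 < r₀ * Real.log 2 / 2 := by positivity
  have hrpos : 0 < r := by rw [hr, harg]; exact Real.sqrt_pos.2 hargpos
  have hr2 : r^2 = r₀ * Real.log 2 / 2 := by
    rw [hr, harg, Real.sq_sqrt hargpos.le]
  have hr13 : r ≤ 1/3 := by
    rw [hr, harg]
    have h9 : r₀ * Real.log 2 / 2 ≤ 1/9 := by
      rw [hlogb_e] at hr₀'
      have : r₀ * Real.log 2 ≤ 2/9 := by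
        calc r₀ * Real.log 2 ≤ (2 * (Real.log 2)⁻¹ / 9) * Real.log 2 :=
              mul_le_mul_of_nonneg_right hr₀' hcpos.le
          _ = 2/9 := by field_simp
      linarith
    calc Real.sqrt (r₀ * Real.log 2 / 2) ≤ Real.sqrt (1/9) := Real.sqrt_le_sqrt h9
      _ = 1/3 := by
        rw [show (1:ℝ)/9 = (1/3)^2 by norm_num, Real.sqrt_sq (by norm_num : (0:ℝ) ≤ 1/3)]
  have hNge : 3 ≤ N := by
    rw [hN]
    apply Nat.le_floor
    rw [le_div_iff₀ hrpos]
    push_cast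
    linarith
  have hNpos : (0:ℝ) < (N:ℝ) := by
    have : 0 < N := by omega
    exact_mod_cast this
  have hNr : (N:ℝ) ≤ 1/r := by rw [hN]; exact Nat.floor_le (by positivity)
  have hεpos : (0:ℝ) < 1/(N:ℝ) := by positivity
  have hεr : r ≤ 1/(N:ℝ) := by
    rw [le_div_iff₀ hNpos]
    calc r * N ≤ r * (1/r) := mul_le_mul_of_nonneg_left hNr hrpos.le
      _ = 1 := by field_simp
  have hεub : 1/(N:ℝ) < 3/2 * r := by
    have h1 : 1/r - 1 < (N:ℝ) := by rw [hN]; exact Nat.sub_one_lt_floor (1/r)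
    have h2 : 2/(3*r) ≤ 1/r - 1 := by
      rw [div_le_iff₀ (by positivity : (0:ℝ) < 3*r)]
      have h0 : (1/r) * r = 1 := by field_simp
      nlinarith [h0, hr13, hrpos]
    have h3 : 2/(3*r) < (N:ℝ) := lt_of_le_of_lt h2 h1
    have h4 := one_div_lt_one_div_of_lt (by positivity : (0:ℝ) < 2/(3*r)) h3
    calc 1/(N:ℝ) < 1/(2/(3*r)) := h4
      _ = 3/2 * r := by rw [one_div_div]; ring
  -- grid lower bound on positive coordinates
  have hgrid : ∀ f ∈ Nstar, ∀ y, 1/(N:ℝ) ≤ f y := by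
    intro f hf y
    have hfy : 0 < f y := lt_of_lt_of_le hpmin_pos
      (hpmin_le f (by rw [hNstar] at hf; exact hf.1) y)
    rw [hNstar] at hf
    obtain ⟨a, ha⟩ := hf.2 y
    rw [ha] at hfy ⊢
    have ha0 : a ≠ 0 := by
      rintro rfl
      simp at hfy
    have h1a : (1:ℝ) ≤ (a:ℝ) := by exact_mod_cast Nat.one_le_iff_ne_zero.2 ha0
    rw [div_le_div_iff₀ hNpos hNpos]
    exact mul_le_mul_of_nonneg_right h1a hNpos.le
  -- notation
  set ε := 1/(N:ℝ) with hε
  set p := P i with hpdef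
  set q := P j with hqdef
  set s := Q j with hsdef
  have hQi' : Q i = p + ε := hQi
  have hs_eq : s = q - ε := hQj
  have hq_eq : q = s + ε := by rw [hs_eq]; ring
  have hp_min : pmin ≤ p := hpmin_le P hPΔ i
  have hq_min : pmin ≤ q := hpmin_le P hPΔ j
  have hs_min : pmin ≤ s := hpmin_le Q hQΔ j
  have hp_pos : 0 < p := lt_of_lt_of_le hpmin_pos hp_min
  have hq_pos : 0 < q := lt_of_lt_of_le hpmin_pos hq_min
  have hs_pos : 0 < s := lt_of_lt_of_le hpmin_pos hs_min
  have hpε : ε ≤ p := hgrid P hP i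
  have hq_max : q ≤ pmax := hpmax_ge P hPΔ j
  have hPy_pos : ∀ y, 0 < P y := fun y => lt_of_lt_of_le hpmin_pos (hpmin_le P hPΔ y)
  have hsum1 : ∑ y, P y = 1 := (hΔfacts P hPΔ).1
  have hpq1 : p + q ≤ 1 := by
    calc p + q = ∑ y ∈ ({i, j} : Finset (Fin k)), P y := (Finset.sum_pair hij).symm
      _ ≤ ∑ y, P y := Finset.sum_le_sum_of_subset_of_nonneg (Finset.subset_univ _)
            (fun y _ _ => (hPy_pos y).le)
      _ = 1 := hsum1
  -- log quantities
  set la := Real.log (p / (p + ε)) with hla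
  set lb := Real.log (q / s) with hlb
  have hzero1 : ∀ y ∈ Finset.univ, y ∉ ({i, j} : Finset (Fin k)) →
      P y * Real.logb 2 (P y / Q y) = 0 := by
    intro y _ hy
    simp only [Finset.mem_insert, Finset.mem_singleton, not_or] at hy
    rw [hQo y hy.1 hy.2, div_self (hPy_pos y).ne', Real.logb_one, mul_zero]
  have hzero2 : ∀ y ∈ Finset.univ, y ∉ ({i, j} : Finset (Fin k)) →
      P y * (Real.logb 2 (P y / Q y))^2 = 0 := by
    intro y _ hy
    simp only [Finset.mem_insert, Finset.mem_singleton, not_or] at hy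
    rw [hQo y hy.1 hy.2, div_self (hPy_pos y).ne', Real.logb_one]
    ring
  have hklD : klD P Q = (p * la + q * lb) / Real.log 2 := by
    unfold klD
    rw [← Finset.sum_subset (Finset.subset_univ ({i, j} : Finset (Fin k))) hzero1]
    rw [Finset.sum_pair hij, hQi']
    simp only [Real.logb, hla, hlb, ← hpdef, ← hqdef, ← hsdef]
    ring
  have hS2 : ∑ y, P y * (Real.logb 2 (P y / Q y))^2
      = (p * la^2 + q * lb^2) / (Real.log 2)^2 := by
    rw [← Finset.sum_subset (Finset.subset_univ ({i, j} : Finset (Fin k))) hzero2]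
    rw [Finset.sum_pair hij, hQi']
    simp only [Real.logb, hla, hlb, ← hpdef, ← hqdef, ← hsdef]
    field_simp
  have hVllr : Vllr P Q
      = (p * la^2 + q * lb^2 - (p * la + q * lb)^2) / (Real.log 2)^2 := by
    have e1 : Vllr P Q = (∑ y, P y * (Real.logb 2 (P y / Q y))^2) - (klD P Q)^2 := by
      unfold Vllr
      have e2 : ∀ y ∈ Finset.univ, P y * (Real.logb 2 (P y / Q y) - klD P Q)^2
          = P y * (Real.logb 2 (P y / Q y))^2
            - 2 * klD P Q * (P y * Real.logb 2 (P y / Q y)) + (klD P Q)^2 * P y :=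
        fun y _ => by ring
      rw [Finset.sum_congr rfl e2, Finset.sum_add_distrib, Finset.sum_sub_distrib,
        ← Finset.mul_sum, ← Finset.mul_sum, hsum1]
      unfold klD
      ring
    rw [e1, hS2, hklD]
    field_simp
  -- log estimates
  have hu1 : 0 ≤ ε/p := by positivity
  have hu2 : 0 ≤ ε/s := by positivity
  have hla_eq : la = -Real.log (1 + ε/p) := by
    have hpe : p + ε ≠ 0 := by positivity
    rw [hla, show p/(p+ε) = (1 + ε/p)⁻¹ by field_simp, Real.log_inv]
  have hlb_eq : lb = Real.log (1 + ε/s) := by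
    rw [hlb, hq_eq]
    congr 1
    field_simp
  have hla_neg : la ≤ -(ε/(p+ε)) := by
    rw [hla_eq]
    have h := log_ge_div hu1
    have hpe : p + ε ≠ 0 := by positivity
    have he : (ε/p)/(1+ε/p) = ε/(p+ε) := by
      field_simp
    rw [he] at h
    linarith
  have hla_sq : la^2 ≤ ε^2/(p*(p+ε)) := by
    rw [hla_eq, neg_sq]
    have h := sq_log_le hu1
    have hpe : p + ε ≠ 0 := by positivity
    have he : (ε/p)^2/(1+ε/p) = ε^2/(p*(p+ε)) := by
      field_simp
    rwa [he] at h
  have hlb_ge : ε/q ≤ lb := by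
    rw [hlb_eq]
    have h := log_ge_div hu2
    have hse : s + ε ≠ 0 := by positivity
    have he : (ε/s)/(1+ε/s) = ε/q := by
      rw [hq_eq]
      field_simp
    rwa [he] at h
  have hlb_sq : lb^2 ≤ ε^2/(s*q) := by
    rw [hlb_eq]
    have h := sq_log_le hu2
    have hse : s + ε ≠ 0 := by positivity
    have he : (ε/s)^2/(1+ε/s) = ε^2/(s*q) := by
      rw [hq_eq]
      field_simp
    rwa [he] at h
  set Vn := p * la^2 + q * lb^2 - (p * la + q * lb)^2 with hVn
  have hVar_ge : p*q*(lb - la)^2 ≤ Vn := by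
    have h1q : 0 ≤ 1 - (p+q) := by linarith
    have key : (p * la^2 + q * lb^2 - (p * la + q * lb)^2) - p*q*(lb - la)^2
        = p*(1-(p+q))*la^2 + q*(1-(p+q))*lb^2 := by ring
    have t1 : 0 ≤ p*(1-(p+q))*la^2 := mul_nonneg (mul_nonneg hp_pos.le h1q) (sq_nonneg la)
    have t2 : 0 ≤ q*(1-(p+q))*lb^2 := mul_nonneg (mul_nonneg hq_pos.le h1q) (sq_nonneg lb)
    rw [hVn]
    linarith
  have hdiff : ε/(2*p) + ε/q ≤ lb - la := by
    have h2p : ε/(2*p) ≤ ε/(p+ε) := by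
      gcongr
      <;> linarith [hεpos, hpε, hp_pos]
    linarith
  have hlow2 : 2*ε^2 ≤ p*q*(ε/(2*p) + ε/q)^2 := by
    have gen : ∀ e pp qq : ℝ, 0 < e → 0 < pp → 0 < qq →
        2*e^2 ≤ pp*qq*(e/(2*pp)+e/qq)^2 := by
      intro e pp qq he hp hq
      have h1 : e/(2*pp)+e/qq = e*(qq+2*pp)/(2*pp*qq) := by field_simp
      rw [h1, div_pow, ← mul_div_assoc, le_div_iff₀ (by positivity)]
      have key : pp*qq*(e*(qq+2*pp))^2 - 2*e^2*((2*pp*qq)^2) = pp*qq*(e*(2*pp-qq))^2 := by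
        ring
      have t := mul_nonneg (mul_nonneg hp.le hq.le) (sq_nonneg (e*(2*pp-qq)))
      linarith
    exact gen ε p q hεpos hp_pos hq_pos
  have hsq_mono : (ε/(2*p) + ε/q)^2 ≤ (lb - la)^2 := by
    have h0 : 0 ≤ ε/(2*p) + ε/q := by positivity
    exact pow_le_pow_left₀ h0 hdiff 2
  have hVn_low : 65/36 * r^2 ≤ Vn := by
    have h1 : p*q*(ε/(2*p) + ε/q)^2 ≤ p*q*(lb - la)^2 :=
      mul_le_mul_of_nonneg_left hsq_mono (by positivity)
    have h2 : r^2 ≤ ε^2 := pow_le_pow_left₀ hrpos.le hεr 2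
    linarith [sq_nonneg r, hVar_ge, hlow2, h1]
  have h1u : p*la^2 ≤ ε^2/(p+ε) := by
    have h := mul_le_mul_of_nonneg_left hla_sq hp_pos.le
    have hpe : p + ε ≠ 0 := by positivity
    have he : p * (ε^2/(p*(p+ε))) = ε^2/(p+ε) := by
      field_simp
    linarith [he ▸ h]
  have h2u : q*lb^2 ≤ ε^2/s := by
    have h := mul_le_mul_of_nonneg_left hlb_sq hq_pos.le
    have he : q * (ε^2/(s*q)) = ε^2/s := by
      field_simp
    linarith [he ▸ h]
  have h3u : ε^2/(p+ε) ≤ ε^2/pmin := by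
    gcongr <;> first | exact sq_nonneg ε | linarith
  have h4u : ε^2/s ≤ ε^2/pmin := by
    gcongr <;> first | exact sq_nonneg ε | linarith
  have h5u : ε^2 ≤ 9/4*r^2 := by
    have := pow_le_pow_left₀ hεpos.le hεub.le 2
    have he : (3/2*r)^2 = 9/4*r^2 := by ring
    linarith
  have hVn_up : Vn ≤ 5*r^2/(pmin*(1-pmax)^2) := by
    have hA : Vn ≤ 2*(ε^2/pmin) := by
      have h := sq_nonneg (p*la+q*lb)
      rw [hVn]
      linarith
    have hB : 2*(ε^2/pmin) ≤ (9/2*r^2)/pmin := by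
      rw [show 2*(ε^2/pmin) = (2*ε^2)/pmin by ring]
      exact (div_le_div_iff_of_pos_right hpmin_pos).2 (by linarith [h5u])
    have hC : (9/2*r^2)/pmin ≤ 5*r^2/(pmin*(1-pmax)^2) := by
      rw [div_le_div_iff₀ hpmin_pos
        (mul_pos hpmin_pos (pow_pos (by linarith : (0:ℝ) < 1 - pmax) 2))]
      have t1 : 0 ≤ r^2*pmin := mul_nonneg (sq_nonneg r) hpmin_pos.le
      have t2 : 0 ≤ r^2*pmin*(pmax*(2-pmax)) :=
        mul_nonneg t1 (mul_nonneg hpmax_pos.le (by linarith))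
      have key : 5*r^2*pmin - 9/2*r^2*(pmin*(1-pmax)^2)
          = 1/2*(r^2*pmin) + 9/2*(r^2*pmin*(pmax*(2-pmax))) := by ring
      linarith
    linarith
  constructor
  · rw [hVllr, hlogb_e]
    have heq : 65 * (Real.log 2)⁻¹ / 72 * r₀ = (65/36*r^2)/(Real.log 2)^2 := by
      rw [hr2]
      field_simp
      ring
    rw [heq]
    exact (div_le_div_iff_of_pos_right (by positivity : (0:ℝ) < (Real.log 2)^2)).2 hVn_low
  · rw [hVllr, hlogb_e]
    have h1pm : (0:ℝ) < 1 - pmax := by linarith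
    have heq : 5 * (Real.log 2)⁻¹ / (2*pmin*(1-pmax)^2) * r₀
        = (5*r^2/(pmin*(1-pmax)^2))/(Real.log 2)^2 := by
      rw [hr2]
      field_simp
    rw [heq]
    exact (div_le_div_iff_of_pos_right (by positivity : (0:ℝ) < (Real.log 2)^2)).2 hVn_up
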